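/- Let N be odd and 0 ≤ n ≤ ⌊N/2⌋. For every k with |k| ≤ ⌊N/2⌋, the Gaussian-type vector satisfies u_n(k) = (α_n S(n)² / N²) · S(N-n-1-k) · S(N-n-1+k), where α_n = S(n)^{-2} S(2n)^{1/2} for n ≥ 1 and α_0 = 1. -/

import Mathlib

open Real Finset

/-- `S N k = ∏_{j=1}^{k} (2 sin(ω j / 2))` with `ω = 2π/N`, extended to integer arguments. -/
noncomputable def SZ (N : ℕ) (k : ℤ) : ℝ := ∏ j ∈ Finset.Icc 1 k.toNat, (2 * Real.sin (π * j / N))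

/-- `S N k` for natural `k`. -/
noncomputable def S (N k : ℕ) : ℝ := ∏ j ∈ Finset.Icc 1 k, (2 * Real.sin (π * j / N))

/-- `t_k = (2/√ω) sin(ω k / 2)` with `ω = 2π/N`. -/
noncomputable def t (N : ℕ) (k : ℤ) : ℝ := (2 / Real.sqrt (2 * π / N)) * Real.sin (π * k / N)

/-- The normalisation constant `α_n`. -/
noncomputable def alph (N n : ℕ) : ℝ :=
  if n = 0 then (if Even N then 1 / 2 else 1)
  else if Even N then Real.sqrt (S N (2 * n - 1) * Real.sin (π * n / N)) / S N n ^ 2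
  else Real.sqrt (S N (2 * n)) / S N n ^ 2

/-- The Gaussian-type vector `u_n(k) = α_n ∏_{j=n+1}^{⌊N/2⌋} (1 - (t_k/t_j)²)`. -/
noncomputable def u (N n : ℕ) (k : ℤ) : ℝ :=
  alph N n * ∏ j ∈ Finset.Icc (n + 1) (N / 2), (1 - (t N k / t N j) ^ 2)

/- ### Auxiliary lemmas -/

lemma abs_one_sub_exp (θ : ℝ) :
    ‖1 - Complex.exp (θ * Complex.I)‖ = |2 * Real.sin (θ/2)| := by
  rw [← Real.sqrt_sq_eq_abs, ← Real.sqrt_sq (norm_nonneg _), Complex.sq_norm]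
  congr 1
  rw [Complex.exp_mul_I]
  have : (1 : ℂ) - (Complex.cos θ + Complex.sin θ * Complex.I)
      = Complex.ofReal (1 - Real.cos θ) + Complex.ofReal (- Real.sin θ) * Complex.I := by
    push_cast [Complex.ofReal_cos, Complex.ofReal_sin]
    ring
  rw [this, Complex.normSq_add_mul_I]
  have h2 := Real.sin_sq_eq_half_sub (θ/2)
  have e : 2 * (θ/2) = θ := by ring
  rw [e] at h2
  nlinarith [Real.sin_sq_add_cos_sq θ]

lemma sinpos (N j : ℕ) (h1 : 1 ≤ j) (h2 : j < N) : 0 < Real.sin (π * j / N) := by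
  have hj : (1:ℝ) ≤ j := by exact_mod_cast h1
  have hjN : (j:ℝ) < N := by exact_mod_cast h2
  have hN : (0:ℝ) < N := by linarith
  apply Real.sin_pos_of_pos_of_lt_pi
  · positivity
  · rw [div_lt_iff₀ hN]
    nlinarith [Real.pi_pos]

lemma prodN (N : ℕ) (hN : 1 ≤ N) :
    ∏ j ∈ Finset.Icc 1 (N-1), (2 * Real.sin (π * j / N)) = N := by
  obtain ⟨m, rfl⟩ : ∃ m, N = m + 1 := ⟨N - 1, (Nat.succ_pred_eq_of_pos hN).symm⟩
  have hprim := Complex.isPrimitiveRoot_exp (m+1) (Nat.succ_ne_zero m)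
  have h := hprim.prod_one_sub_pow_eq_order
  apply_fun (‖·‖) at h
  rw [norm_prod] at h
  simp only [Nat.add_sub_cancel]
  rw [← Finset.Ico_add_one_right_eq_Icc, Finset.prod_Ico_eq_prod_range]
  have habs : ‖((m:ℂ)+1)‖ = ((m:ℝ)+1) := by
    rw [show ((m:ℂ)+1) = ((m+1 : ℕ) : ℂ) by push_cast; ring]
    rw [Complex.norm_natCast]
    push_cast; ring
  rw [habs] at h
  simp only [Nat.add_sub_cancel]
  have key : ∀ x ∈ Finset.range m, (2 * Real.sin (π * ((1+x : ℕ)) / ((m+1 : ℕ))))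
      = ‖1 - Complex.exp (2 * π * Complex.I / ((m+1:ℕ))) ^ (x+1)‖ := by
    intro x hx
    simp only [Finset.mem_range] at hx
    have hexp : (Complex.exp (2 * π * Complex.I / ((m+1 : ℕ)))) ^ (x+1)
        = Complex.exp ((2 * π * (x+1) / (m+1) : ℝ) * Complex.I) := by
      rw [← Complex.exp_nat_mul]
      congr 1
      push_cast
      field_simp
    rw [hexp, abs_one_sub_exp]
    have hs : 0 < Real.sin (2 * π * (x+1) / (m+1) / 2) := by
      apply Real.sin_pos_of_pos_of_lt_pi
      · have h1 : (0:ℝ) < (x:ℝ)+1 := by positivity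
        have h2 : (0:ℝ) < (m:ℝ)+1 := by positivity
        positivity
      · rw [div_lt_iff₀ (by positivity : (0:ℝ) < 2), div_lt_iff₀ (by positivity : (0:ℝ) < (m:ℝ)+1)]
        have : (x:ℝ)+1 < (m:ℝ)+1 := by exact_mod_cast Nat.succ_lt_succ hx
        nlinarith [Real.pi_pos]
    rw [abs_of_pos (by linarith)]
    congr 1
    push_cast
    ring
  rw [Finset.prod_congr rfl key, h]
  push_cast
  ring

lemma Spos (N m : ℕ) (hm : m < N) : 0 < S N m := by
  apply Finset.prod_pos
  intro j hj
  simp only [Finset.mem_Icc] at hj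
  have := sinpos N j hj.1 (lt_of_le_of_lt hj.2 hm)
  linarith

lemma ratio (N a b : ℕ) (hab : a ≤ b) :
    S N a * ∏ j ∈ Finset.Icc (a+1) b, (2 * Real.sin (π * j / N)) = S N b := by
  unfold S
  rw [show Finset.Icc 1 a = Finset.Ioc 0 a from Finset.Icc_add_one_left_eq_Ioc 0 a,
      show Finset.Icc (a+1) b = Finset.Ioc a b from Finset.Icc_add_one_left_eq_Ioc a b,
      show Finset.Icc 1 b = Finset.Ioc 0 b from Finset.Icc_add_one_left_eq_Ioc 0 b]
  exact Finset.prod_Ioc_consecutive _ (Nat.zero_le a) hab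

lemma reflect (N a b : ℕ) (hab : a + b = N - 1) (hN : 1 ≤ N) :
    S N a * S N b = N := by
  rw [← prodN N hN]
  have hres : (∏ j ∈ Finset.Icc 1 (N-1), (2 * Real.sin (π * j / N))) = S N (N-1) := rfl
  rw [hres, ← ratio N a (N-1) (by omega)]
  congr 1
  unfold S
  apply Finset.prod_nbij' (i := fun j => N - j) (j := fun j => N - j)
  · intro x hx; simp only [Finset.mem_Icc] at *; omega
  · intro x hx; simp only [Finset.mem_Icc] at *; omega
  · intro x hx; simp only [Finset.mem_Icc] at *; omega
  · intro x hx; simp only [Finset.mem_Icc] at *; omega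
  · intro x hx
    simp only [Finset.mem_Icc] at hx
    congr 1
    have hxN : x ≤ N := by omega
    rw [Nat.cast_sub hxN]
    have hN0 : (N:ℝ) ≠ 0 := by positivity
    rw [show π * ((N:ℝ) - x) / N = π - π * x / N by field_simp, Real.sin_pi_sub]

lemma shiftp (f : ℕ → ℝ) (a b κ : ℕ) :
    ∏ j ∈ Finset.Icc (a+1) b, f (j + κ) = ∏ j ∈ Finset.Icc (a+κ+1) (b+κ), f j := by
  apply Finset.prod_nbij' (i := fun j => j + κ) (j := fun j => j - κ)
  · intro x hx; simp only [Finset.mem_Icc] at *; omega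
  · intro x hx; simp only [Finset.mem_Icc] at *; omega
  · intro x hx; simp only [Finset.mem_Icc] at *; omega
  · intro x hx; simp only [Finset.mem_Icc] at *; omega
  · intro x hx; rfl

lemma shiftm (f : ℕ → ℝ) (a b κ : ℕ) (ha : κ ≤ a) :
    ∏ j ∈ Finset.Icc (a+1) b, f (j - κ) = ∏ j ∈ Finset.Icc (a-κ+1) (b-κ), f j := by
  apply Finset.prod_nbij' (i := fun j => j - κ) (j := fun j => j + κ)
  · intro x hx; simp only [Finset.mem_Icc] at *; omega
  · intro x hx; simp only [Finset.mem_Icc] at *; omega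
  · intro x hx; simp only [Finset.mem_Icc] at *; omega
  · intro x hx; simp only [Finset.mem_Icc] at *; omega
  · intro x hx; rfl

lemma sin_sq_sub (a b : ℝ) :
    Real.sin b ^ 2 - Real.sin a ^ 2 = Real.sin (b + a) * Real.sin (b - a) := by
  rw [Real.sin_add, Real.sin_sub]
  nlinarith [Real.sin_sq_add_cos_sq a, Real.sin_sq_add_cos_sq b]

lemma t_ratio (N : ℕ) (hN : 1 ≤ N) (k j : ℤ) :
    t N k / t N j = Real.sin (π * k / N) / Real.sin (π * j / N) := by
  unfold t
  have hc : (2 : ℝ) / Real.sqrt (2 * π / N) ≠ 0 := by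
    have hN0 : (0:ℝ) < N := by exact_mod_cast hN
    have : (0:ℝ) < 2 * π / N := by positivity
    positivity
  rw [mul_div_mul_left _ _ hc]

lemma t_neg (N : ℕ) (m : ℤ) : t N (-m) = - t N m := by
  unfold t
  have h1 : ((-m : ℤ) : ℝ) = -(m:ℝ) := by push_cast; ring
  rw [h1, show π * -(m:ℝ)/N = -(π*(m:ℝ)/N) by ring, Real.sin_neg]
  ring

/-- The core computation, for a nonnegative offset `κ`. -/
lemma core (N M n κ : ℕ) (hN3 : 3 ≤ N) (hM : N = 2*M+1) (hn : n ≤ M) (hκ : κ ≤ M) :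
    ∏ j ∈ Finset.Icc (n + 1) M, (1 - (t N (κ:ℤ) / t N (j:ℤ)) ^ 2)
      = S N n ^ 2 / (N:ℝ) ^ 2 * S N (2*M - n - κ) * S N (2*M - n + κ) := by
  have hN1 : 1 ≤ N := by omega
  have hNR : (0:ℝ) < N := by exact_mod_cast hN1
  by_cases hcase : n < κ
  · -- both sides vanish
    have hL : (1 - (t N (κ:ℤ) / t N (κ:ℤ)) ^ 2) = 0 := by
      have ht : t N (κ:ℤ) ≠ 0 := by
        unfold t
        have hs : 0 < Real.sin (π * (κ:ℕ) / N) := sinpos N κ (by omega) (by omega)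
        have hc : (0:ℝ) < 2 / Real.sqrt (2 * π / N) := by
          have : (0:ℝ) < 2 * π / N := by positivity
          positivity
        push_cast
        positivity
      rw [div_self ht]
      norm_num
    have hLz : ∏ j ∈ Finset.Icc (n + 1) M, (1 - (t N (κ:ℤ) / t N (j:ℤ)) ^ 2) = 0 :=
      Finset.prod_eq_zero (Finset.mem_Icc.mpr ⟨by omega, hκ⟩) hL
    have hRz : S N (2*M - n + κ) = 0 := by
      apply Finset.prod_eq_zero (i := N) (Finset.mem_Icc.mpr ⟨by omega, by omega⟩)
      rw [show π * (N:ℝ) / N = π by field_simp]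
      simp
    rw [hLz, hRz, mul_zero]
  · push_neg at hcase   -- κ ≤ n
    -- positivity / nonvanishing facts
    have hSpos : ∀ m : ℕ, m ≤ 2*M → 0 < S N m := fun m hm => Spos N m (by omega)
    -- rewrite each factor
    have hfac : ∀ j ∈ Finset.Icc (n+1) M, (1 - (t N (κ:ℤ) / t N (j:ℤ)) ^ 2)
        = (2 * Real.sin (π * ((j - κ : ℕ)) / N)) * (2 * Real.sin (π * ((j + κ : ℕ)) / N))
          / (2 * Real.sin (π * j / N)) ^ 2 := by
      intro j hj
      simp only [Finset.mem_Icc] at hj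
      have hsj : 0 < Real.sin (π * j / N) := sinpos N j (by omega) (by omega)
      rw [t_ratio N hN1]
      push_cast [Nat.cast_sub (show κ ≤ j by omega)]
      have key := sin_sq_sub (π * κ / N) (π * j / N)
      have e1 : π * (j:ℝ) / N + π * κ / N = π * ((j:ℝ) + κ) / N := by ring
      have e2 : π * (j:ℝ) / N - π * κ / N = π * ((j:ℝ) - κ) / N := by ring
      rw [e1, e2] at key
      field_simp
      linear_combination key
    rw [Finset.prod_congr rfl hfac]
    rw [Finset.prod_div_distrib, Finset.prod_mul_distrib]
    -- evaluate the three products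
    have hm : ∏ j ∈ Finset.Icc (n+1) M, (2 * Real.sin (π * ((j - κ : ℕ)) / N))
        = S N (M - κ) / S N (n - κ) := by
      rw [shiftm (fun i => 2 * Real.sin (π * i / N)) n M κ hcase]
      rw [eq_div_iff (ne_of_gt (hSpos _ (by omega))), mul_comm]
      exact ratio N (n-κ) (M-κ) (by omega)
    have hp : ∏ j ∈ Finset.Icc (n+1) M, (2 * Real.sin (π * ((j + κ : ℕ)) / N))
        = S N (M + κ) / S N (n + κ) := by
      rw [shiftp (fun i => 2 * Real.sin (π * i / N)) n M κ]
      rw [eq_div_iff (ne_of_gt (hSpos _ (by omega))), mul_comm]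
      exact ratio N (n+κ) (M+κ) (by omega)
    have hd : ∏ j ∈ Finset.Icc (n+1) M, (2 * Real.sin (π * j / N)) ^ 2
        = (S N M / S N n) ^ 2 := by
      rw [Finset.prod_pow]
      congr 1
      rw [eq_div_iff (ne_of_gt (hSpos _ (by omega))), mul_comm]
      exact ratio N n M (by omega)
    rw [hm, hp, hd]
    -- the algebra
    have h1 : S N (M - κ) * S N (M + κ) = N := reflect N _ _ (by omega) hN1
    have h2 : S N M * S N M = N := reflect N _ _ (by omega) hN1
    have h3 : S N (n + κ) * S N (2*M - n - κ) = N := reflect N _ _ (by omega) hN1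
    have h4 : S N (n - κ) * S N (2*M - n + κ) = N := reflect N _ _ (by omega) hN1
    have p1 := hSpos (M - κ) (by omega)
    have p2 := hSpos (M + κ) (by omega)
    have p3 := hSpos (n + κ) (by omega)
    have p4 := hSpos (n - κ) (by omega)
    have p5 := hSpos M (by omega)
    have p6 := hSpos n (by omega)
    have p7 := hSpos (2*M - n - κ) (by omega)
    have p8 := hSpos (2*M - n + κ) (by omega)
    have hc1 : S N (2*M - n - κ) = (N:ℝ) / S N (n + κ) := by
      rw [eq_div_iff (ne_of_gt p3)]
      linarith [h3]
    have hc2 : S N (2*M - n + κ) = (N:ℝ) / S N (n - κ) := by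
      rw [eq_div_iff (ne_of_gt p4)]
      linarith [h4]
    rw [hc1, hc2]
    field_simp
    linear_combination h1 - h2

theorem stmt_7 (N : ℕ) (hN : 3 ≤ N) (hodd : Odd N) (n : ℕ) (hn : n ≤ N / 2)
    (k : ℤ) (hk : |k| ≤ (N : ℤ) / 2) :
    u N n k = alph N n * S N n ^ 2 / (N : ℝ) ^ 2
        * SZ N ((N : ℤ) - n - 1 - k) * SZ N ((N : ℤ) - n - 1 + k) := by
  obtain ⟨M, hM⟩ := hodd
  have hM2 : N / 2 = M := by omega
  have hnM : n ≤ M := by omega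
  have hkM : k.natAbs ≤ M := by
    rw [Int.abs_eq_natAbs] at hk
    omega
  set κ := k.natAbs with hκ
  have habs : (t N k)^2 = (t N (κ:ℤ))^2 := by
    rcases Int.natAbs_eq k with h | h
    · rw [← h]
    · rw [h, t_neg]
      ring
  unfold u
  rw [hM2]
  have hprod : ∏ j ∈ Finset.Icc (n + 1) M, (1 - (t N k / t N (j:ℤ)) ^ 2)
      = ∏ j ∈ Finset.Icc (n + 1) M, (1 - (t N (κ:ℤ) / t N (j:ℤ)) ^ 2) := by
    apply Finset.prod_congr rfl
    intro j hj
    rw [div_pow, div_pow, habs]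
  rw [hprod, core N M n κ hN (by omega) hnM hkM]
  have hSZ1 : SZ N ((N : ℤ) - n - 1 - k) = S N (((N : ℤ) - n - 1 - k).toNat) := rfl
  have hSZ2 : SZ N ((N : ℤ) - n - 1 + k) = S N (((N : ℤ) - n - 1 + k).toNat) := rfl
  rcases Int.natAbs_eq k with h | h
  · have e1 : ((N : ℤ) - n - 1 - k).toNat = 2*M - n - κ := by omega
    have e2 : ((N : ℤ) - n - 1 + k).toNat = 2*M - n + κ := by omega
    rw [hSZ1, hSZ2, e1, e2]
    ring
  · have e1 : ((N : ℤ) - n - 1 - k).toNat = 2*M - n + κ := by omega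
    have e2 : ((N : ℤ) - n - 1 + k).toNat = 2*M - n - κ := by omega
    rw [hSZ1, hSZ2, e1, e2]
    ring
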